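/- Let (Ω, F, P) be a probability space and let S, H, T, Y be random variables taking values in standard Borel (measurable) spaces, where H = φ(S) for a measurable map φ (so H is σ(S)-measurable). If T is conditionally independent of the pair (S, Y) given H (i.e., given the σ-algebra generated by H), then T is conditionally independent of Y given S (i.e., given the σ-algebra generated by S). In other words, adjusting for the observed history S controls for the confounder H: since the treatment assignment depends on the latent state H only and H is a deterministic measurable function of the observed data S, conditioning on S is sufficient to block the confounding between T and Y. -/

import Mathlib

open MeasureTheory ProbabilityTheory

/-- Lemma 3.1: if the treatment `T` is conditionally independent of the pair `(S, Y)`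
given the latent state `H`, and `H = φ ∘ S` is a measurable function of the observed
history `S`, then `T` is conditionally independent of the outcome `Y` given `S`. -/
theorem condIndepFun_treatment_outcome_given_history
    {Ω 𝒮 ℋ 𝒯 𝒴 : Type*}
    {mΩ : MeasurableSpace Ω} [StandardBorelSpace Ω] [Nonempty Ω]
    [MeasurableSpace 𝒮] [StandardBorelSpace 𝒮]
    [MeasurableSpace ℋ] [StandardBorelSpace ℋ]
    [MeasurableSpace 𝒯] [StandardBorelSpace 𝒯]
    [MeasurableSpace 𝒴] [StandardBorelSpace 𝒴]
    (P : Measure Ω) [IsProbabilityMeasure P]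
    (S : Ω → 𝒮) (H : Ω → ℋ) (T : Ω → 𝒯) (Y : Ω → 𝒴)
    (hS : Measurable S) (hH : Measurable H) (hT : Measurable T) (hY : Measurable Y)
    (φ : 𝒮 → ℋ) (hφ : Measurable φ) (hHS : H = φ ∘ S)
    (hCI : CondIndepFun (MeasurableSpace.comap H inferInstance) hH.comap_le
      T (fun ω => (S ω, Y ω)) P) :
    CondIndepFun (MeasurableSpace.comap S inferInstance) hS.comap_le T Y P := by
  have hSY : Measurable fun ω => (S ω, Y ω) := hS.prodMk hY
  set mS := MeasurableSpace.comap S inferInstance with hmS_def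
  set mH := MeasurableSpace.comap H inferInstance with hmH_def
  set mSY := MeasurableSpace.comap (fun ω => (S ω, Y ω)) inferInstance with hmSY_def
  have hmH_le_S : mH ≤ mS := by
    rintro _ ⟨u, hu, rfl⟩
    exact ⟨φ ⁻¹' u, hφ hu, by rw [hHS]; rfl⟩
  have hmS_le_SY : mS ≤ mSY := by
    rintro _ ⟨u, hu, rfl⟩
    exact ⟨u ×ˢ Set.univ, hu.prod MeasurableSet.univ, by ext ω; simp⟩
  have hmY_le_SY : MeasurableSpace.comap Y inferInstance ≤ mSY := by
    rintro _ ⟨u, hu, rfl⟩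
    exact ⟨Set.univ ×ˢ u, MeasurableSet.univ.prod hu, by ext ω; simp⟩
  have hmH_le : mH ≤ mΩ := hH.comap_le
  have hmS_le : mS ≤ mΩ := hS.comap_le
  have hmSY_le : mSY ≤ mΩ := hSY.comap_le
  letI m0 : MeasurableSpace Ω := mΩ
  rw [condIndepFun_iff _ _ _ _ hT hSY] at hCI
  rw [condIndepFun_iff _ _ _ _ hT hY]
  intro A B hA hB
  have hAmeas : MeasurableSet[mΩ] A := hT.comap_le _ hA
  have hBSY : MeasurableSet[mSY] B := hmY_le_SY _ hB
  have hBmeas : MeasurableSet[mΩ] B := hmSY_le _ hBSY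
  -- the conditional probability of `A` given `mH` is a.e. bounded by `1` in norm
  have hbdd : ∀ᵐ ω ∂P, ‖(P⟦A | mH⟧) ω‖ ≤ (1 : ℝ) := by
    have h0 : (0 : Ω → ℝ) ≤ᵐ[P] P⟦A | mH⟧ :=
      condExp_nonneg (Filter.Eventually.of_forall fun ω =>
        Set.indicator_nonneg (fun _ _ => zero_le_one) ω)
    have h1 : P⟦A | mH⟧ ≤ᵐ[P] P[(fun _ => (1 : ℝ)) | mH] :=
      condExp_mono ((integrable_const 1).indicator hAmeas) (integrable_const 1)
        (Filter.Eventually.of_forall fun ω =>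
          Set.indicator_apply_le' (fun _ => le_rfl) (fun _ => zero_le_one))
    rw [condExp_const hmH_le (1 : ℝ) (μ := P)] at h1
    filter_upwards [h0, h1] with ω h0ω h1ω
    rw [Real.norm_eq_abs, abs_le]
    have h0' : (0 : ℝ) ≤ (P⟦A | mH⟧) ω := by simpa using h0ω
    have h1' : (P⟦A | mH⟧) ω ≤ 1 := by simpa using h1ω
    exact ⟨by linarith, h1'⟩
  have hAint : Integrable (A.indicator fun _ => (1 : ℝ)) P :=
    (integrable_const 1).indicator hAmeas
  have hBint : Integrable (B.indicator fun _ => (1 : ℝ)) P :=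
    (integrable_const 1).indicator hBmeas
  -- key: `P⟦A | mSY⟧ = P⟦A | mH⟧` a.e.
  have key : (P⟦A | mSY⟧) =ᵐ[P] (P⟦A | mH⟧) := by
    refine (ae_eq_condExp_of_forall_setIntegral_eq hmSY_le hAint
      (fun s _ _ => integrable_condExp.integrableOn) (fun C hC hCfin => ?_)
      (stronglyMeasurable_condExp.mono (hmH_le_S.trans hmS_le_SY)).aestronglyMeasurable).symm
    have hCmeas : MeasurableSet[mΩ] C := hmSY_le _ hC
    have hCint : Integrable (C.indicator fun _ => (1 : ℝ)) P :=
      (integrable_const 1).indicator hCmeas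
    have hprod : Integrable ((P⟦A | mH⟧) * C.indicator fun _ => (1 : ℝ)) P :=
      hCint.bdd_mul (c := 1) (stronglyMeasurable_condExp.mono hmH_le).aestronglyMeasurable hbdd
    have hmul : P[(P⟦A | mH⟧) * C.indicator (fun _ => (1 : ℝ)) | mH]
        =ᵐ[P] (P⟦A | mH⟧) * P⟦C | mH⟧ :=
      condExp_mul_of_stronglyMeasurable_left stronglyMeasurable_condExp hprod hCint
    have hCIeq : (P⟦A ∩ C | mH⟧) =ᵐ[P] (P⟦A | mH⟧) * (P⟦C | mH⟧) := hCI A C hA hC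
    calc ∫ x in C, (P⟦A | mH⟧) x ∂P
        = ∫ x, ((P⟦A | mH⟧) * C.indicator fun _ => (1 : ℝ)) x ∂P := by
          rw [← integral_indicator hCmeas]
          congr 1
          funext x
          by_cases hx : x ∈ C <;> simp [Set.indicator_apply, hx]
      _ = ∫ x, (P[(P⟦A | mH⟧) * C.indicator (fun _ => (1 : ℝ)) | mH]) x ∂P :=
          (integral_condExp hmH_le).symm
      _ = ∫ x, ((P⟦A | mH⟧) * (P⟦C | mH⟧)) x ∂P := integral_congr_ae hmul
      _ = ∫ x, (P⟦A ∩ C | mH⟧) x ∂P := (integral_congr_ae hCIeq).symm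
      _ = ∫ x, (A ∩ C).indicator (fun _ => (1 : ℝ)) x ∂P :=
          integral_condExp hmH_le
      _ = ∫ x in C, A.indicator (fun _ => (1 : ℝ)) x ∂P := by
          rw [← integral_indicator hCmeas]
          congr 1
          funext x
          by_cases hx : x ∈ C <;> by_cases hx' : x ∈ A <;>
            simp [Set.indicator_apply, hx, hx']
  -- `P⟦A | mS⟧ = P⟦A | mH⟧` a.e.
  have hAS : (P⟦A | mS⟧) =ᵐ[P] (P⟦A | mH⟧) := by
    calc (P⟦A | mS⟧) =ᵐ[P] P[(P⟦A | mSY⟧) | mS] :=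
          (condExp_condExp_of_le hmS_le_SY hmSY_le).symm
      _ =ᵐ[P] P[(P⟦A | mH⟧) | mS] := condExp_congr_ae key
      _ =ᵐ[P] (P⟦A | mH⟧) := by
          rw [condExp_of_stronglyMeasurable hmS_le
            (stronglyMeasurable_condExp.mono hmH_le_S) integrable_condExp]
  -- pull-out the indicator of `B` given `mSY`
  have hABind : (A ∩ B).indicator (fun _ => (1 : ℝ))
      = (B.indicator fun _ => (1 : ℝ)) * (A.indicator fun _ => (1 : ℝ)) := by
    funext x
    by_cases hx : x ∈ A <;> by_cases hx' : x ∈ B <;> simp [Set.indicator_apply, hx, hx']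
  have hABint : Integrable ((B.indicator fun _ => (1 : ℝ)) * A.indicator fun _ => (1 : ℝ)) P := by
    rw [← hABind]; exact (integrable_const 1).indicator (hAmeas.inter hBmeas)
  have hpull1 : (P⟦A ∩ B | mSY⟧) =ᵐ[P] (B.indicator fun _ => (1 : ℝ)) * (P⟦A | mSY⟧) := by
    have : (P⟦A ∩ B | mSY⟧)
        = P[(B.indicator fun _ => (1 : ℝ)) * A.indicator (fun _ => (1 : ℝ)) | mSY] := by
      rw [← hABind]
    rw [this]
    exact condExp_mul_of_stronglyMeasurable_left
      ((stronglyMeasurable_const (b := (1 : ℝ))).indicator hBSY) hABint hAint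
  have hprodS : Integrable ((P⟦A | mH⟧) * B.indicator fun _ => (1 : ℝ)) P :=
    hBint.bdd_mul (c := 1) (stronglyMeasurable_condExp.mono hmH_le).aestronglyMeasurable hbdd
  have hpull2 : P[(P⟦A | mH⟧) * B.indicator (fun _ => (1 : ℝ)) | mS]
      =ᵐ[P] (P⟦A | mH⟧) * (P⟦B | mS⟧) :=
    condExp_mul_of_stronglyMeasurable_left (stronglyMeasurable_condExp.mono hmH_le_S) hprodS hBint
  calc (P⟦A ∩ B | mS⟧) =ᵐ[P] P[(P⟦A ∩ B | mSY⟧) | mS] :=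
        (condExp_condExp_of_le hmS_le_SY hmSY_le).symm
    _ =ᵐ[P] P[(B.indicator fun _ => (1 : ℝ)) * (P⟦A | mSY⟧) | mS] := condExp_congr_ae hpull1
    _ =ᵐ[P] P[(P⟦A | mH⟧) * B.indicator (fun _ => (1 : ℝ)) | mS] := by
        refine condExp_congr_ae ?_
        filter_upwards [key] with x hx
        simp only [Pi.mul_apply, hx, mul_comm]
    _ =ᵐ[P] (P⟦A | mH⟧) * (P⟦B | mS⟧) := hpull2
    _ =ᵐ[P] (P⟦A | mS⟧) * (P⟦B | mS⟧) := by
        filter_upwards [hAS] with x hx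
        simp only [Pi.mul_apply, hx]
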